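/- Let A = ⟨Q, Σ⟩ be a DFA, P a nonempty proper subset of Q, and w ∈ Σ* a word of defect 1 such that the excluded state excl(w) does not belong to P and the duplicate state dupl(w) belongs to P. Then there exists a subset R ⊆ Q with |R| = |P| + 1 and R·w = P. -/

import Mathlib

/-!
Framework: complete deterministic finite automata, reachability of subsets,
defect/excluded/duplicate states of words, and the layered graphs
`Γ₁(A), Γ₂(A), …` of Bondar & Volkov, "A Characterization of Completely
Reachable Automata".
-/

/-- The action of a word on a state: `q · w`. -/
def actWord {Q σ : Type*} (δ : Q → σ → Q) (w : List σ) (q : Q) : Q :=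
  w.foldl δ q

/-- The image of a set of states under a word: `P · w`. -/
def actSet {Q σ : Type*} (δ : Q → σ → Q) (w : List σ) (P : Set Q) : Set Q :=
  actWord δ w '' P

/-- The set `excl(w) = Q \ Q·w` of excluded states of the word `w`. -/
def excl {Q σ : Type*} (δ : Q → σ → Q) (w : List σ) : Set Q :=
  Set.univ \ actSet δ w Set.univ

/-- The defect of the word `w`, i.e. `|Q \ Q·w|`. -/
noncomputable def defect {Q σ : Type*} (δ : Q → σ → Q) (w : List σ) : ℕ :=
  (excl δ w).ncard

/-- The set `dupl(w)` of duplicate states of the word `w`. -/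
def dupl {Q σ : Type*} (δ : Q → σ → Q) (w : List σ) : Set Q :=
  {p | ∃ q₁ q₂ : Q, q₁ ≠ q₂ ∧ actWord δ w q₁ = p ∧ actWord δ w q₂ = p}

/-- A subset `P ⊆ Q` is reachable if `P = Q·w` for some word `w`. -/
def reachableSubset {Q σ : Type*} (δ : Q → σ → Q) (P : Set Q) : Prop :=
  ∃ w : List σ, actSet δ w Set.univ = P

/-- A DFA is completely reachable if every nonempty subset of states is reachable. -/
def completelyReachable {Q σ : Type*} (δ : Q → σ → Q) : Prop :=
  ∀ P : Set Q, P.Nonempty → reachableSubset δ P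

/-- A directed graph given by a vertex set and an edge relation. -/
structure DGraph (V : Type*) where
  verts : Set V
  edge : V → V → Prop

/-- Reachability by a directed path in a graph. -/
def GReach {V : Type*} (G : DGraph V) : V → V → Prop :=
  Relation.ReflTransGen G.edge

/-- A graph is strongly connected if each of its vertices is reachable from
any other one. -/
def StronglyConnected {V : Type*} (G : DGraph V) : Prop :=
  ∀ u ∈ G.verts, ∀ v ∈ G.verts, GReach G u v

/-- The strongly connected component of the vertex `v`: all vertices mutually
reachable with `v`. -/
def scc {V : Type*} (G : DGraph V) (v : V) : Set V :=
  {u | u ∈ G.verts ∧ GReach G u v ∧ GReach G v u}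

/-- Vertices of the layered graphs: states (`Sum.inl`) and subsets of states
(`Sum.inr`). -/
abbrev Vtx (Q : Type*) := Q ⊕ Set Q

/-- The support of a set of vertices: the states belonging to it. -/
def support {Q : Type*} (S : Set (Vtx Q)) : Set Q :=
  {q | Sum.inl q ∈ S}

/-- The graph `Γ₁(A)`: vertices are the states, and there is an edge
`(excl w, dupl w)` for each word `w` of defect 1. -/
def Gamma1 {Q σ : Type*} (δ : Q → σ → Q) : DGraph (Vtx Q) where
  verts := Set.range Sum.inl
  edge := fun u v => ∃ q p : Q, u = Sum.inl q ∧ v = Sum.inl p ∧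
    ∃ w : List σ, defect δ w = 1 ∧ excl δ w = {q} ∧ p ∈ dupl δ w

/-- `Qnext G k`: the collection of the supports of all SCCs of `G` of rank
at least `k` (this is the set `Q_k` when `G = Γ_{k-1}(A)`). -/
def Qnext {Q : Type*} (G : DGraph (Vtx Q)) (k : ℕ) : Set (Set Q) :=
  {C | ∃ v ∈ G.verts, C = support (scc G v) ∧ k ≤ C.ncard}

/-- One step of the iterative construction: from `G = Γ_{k-1}(A)` build
`Γ_k(A)` by adding the new vertices `Q_k`, the inclusion edges `I_k`, and the
edges `E_k` enforced by words of defect `k`. -/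
def step {Q σ : Type*} (δ : Q → σ → Q) (G : DGraph (Vtx Q)) (k : ℕ) :
    DGraph (Vtx Q) where
  verts := G.verts ∪ Sum.inr '' Qnext G k
  edge := fun u v =>
    G.edge u v ∨
    (∃ C ∈ Qnext G k, v = Sum.inr C ∧
      ((∃ q : Q, u = Sum.inl q ∧ q ∈ C) ∨
       (∃ D : Set Q, u = Sum.inr D ∧ Sum.inr D ∈ G.verts ∧ D ⊂ C))) ∨
    (∃ C ∈ Qnext G k, ∃ p : Q, u = Sum.inr C ∧ v = Sum.inl p ∧
      ∃ w : List σ, defect δ w = k ∧ excl δ w ⊆ C ∧ p ∈ dupl δ w)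

/-- The layered graphs `Γ_k(A)` (with `Γ_0 := Γ_1`). -/
def Gamma {Q σ : Type*} (δ : Q → σ → Q) : ℕ → DGraph (Vtx Q)
  | 0 => Gamma1 δ
  | 1 => Gamma1 δ
  | (k + 2) => step δ (Gamma δ (k + 1)) (k + 2)

/-- The FAILURE condition at step `k`: every SCC of `Γ_k(A)` has rank at
most `k`. -/
def failsAt {Q σ : Type*} (δ : Q → σ → Q) (k : ℕ) : Prop :=
  ∀ v ∈ (Gamma δ k).verts, (support (scc (Gamma δ k) v)).ncard ≤ k

/-- The iterative construction stops at step `k` (so `Γ(A) = Γ_k(A)`):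
`k` is the first index at which `Γ_k(A)` is strongly connected (SUCCESS) or
every SCC of `Γ_k(A)` has rank at most `k` (FAILURE). -/
def stopsAt {Q σ : Type*} (δ : Q → σ → Q) (k : ℕ) : Prop :=
  1 ≤ k ∧ (StronglyConnected (Gamma δ k) ∨ failsAt δ k) ∧
    ∀ j, 1 ≤ j → j < k → ¬ StronglyConnected (Gamma δ j) ∧ ¬ failsAt δ j

/-- if `P` is a nonempty proper subset of `Q` and `w` has
defect 1 with the excluded state outside `P` and the duplicate state inside
`P`, then `P = R·w` for some `R ⊆ Q` with `|R| = |P| + 1`. -/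
theorem exists_bigger_preimage_of_defect_one
    {Q σ : Type*} [Fintype Q] (δ : Q → σ → Q) (P : Set Q) (w : List σ)
    (hPne : P.Nonempty) (hPproper : P ⊂ Set.univ)
    (hw : defect δ w = 1)
    (hexcl : excl δ w ∩ P = ∅)
    (hdupl : dupl δ w ⊆ P) :
    ∃ R : Set Q, R.ncard = P.ncard + 1 ∧ actSet δ w R = P := by
  classical
  set f := actWord δ w with hf
  have hred : actSet δ w Set.univ = Set.range f := by
    simp [actSet, Set.image_univ]
    rfl
  obtain ⟨q0, hq0⟩ : ∃ q0, excl δ w = {q0} := Set.ncard_eq_one.mp hw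
  have hq0nP : q0 ∉ P := by
    intro h
    have : q0 ∈ excl δ w ∩ P := ⟨by rw [hq0]; rfl, h⟩
    rw [hexcl] at this
    exact this
  have hq0range : q0 ∉ Set.range f := by
    have h1 : q0 ∈ excl δ w := by rw [hq0]; rfl
    rw [excl, hred] at h1
    exact h1.2
  have hPrange : P ⊆ Set.range f := by
    intro p hp
    by_contra hcon
    have : p ∈ excl δ w := by
      rw [excl, hred]; exact ⟨trivial, hcon⟩
    rw [hq0] at this
    exact hq0nP (this ▸ hp)
  refine ⟨f ⁻¹' P, ?_, ?_⟩
  · have hinj : Set.InjOn f (f ⁻¹' P)ᶜ := by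
      intro x hx y hy hxy
      by_contra hne
      exact hx (hdupl ⟨x, y, hne, rfl, hxy.symm⟩)
    have himg : f '' (f ⁻¹' P)ᶜ = Pᶜ \ {q0} := by
      ext p
      constructor
      · rintro ⟨x, hx, rfl⟩
        refine ⟨hx, ?_⟩
        intro h
        exact hq0range ⟨x, h⟩
      · rintro ⟨hp1, hp2⟩
        have hpr : p ∈ Set.range f := by
          by_contra hcon
          have : p ∈ excl δ w := by rw [excl, hred]; exact ⟨trivial, hcon⟩
          rw [hq0] at this
          exact hp2 this
        obtain ⟨x, rfl⟩ := hpr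
        exact ⟨x, hp1, rfl⟩
    have h1 : (f ⁻¹' P)ᶜ.ncard = (Pᶜ \ {q0}).ncard := by
      rw [← himg, Set.ncard_image_of_injOn hinj]
    have h2 : (Pᶜ \ {q0}).ncard = Pᶜ.ncard - 1 :=
      Set.ncard_diff_singleton_of_mem hq0nP
    have h3 : (f ⁻¹' P).ncard + (f ⁻¹' P)ᶜ.ncard = Nat.card Q :=
      Set.ncard_add_ncard_compl _
    have h4 : P.ncard + Pᶜ.ncard = Nat.card Q := Set.ncard_add_ncard_compl _
    have h5 : 1 ≤ Pᶜ.ncard := by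
      have : Pᶜ.Nonempty := ⟨q0, hq0nP⟩
      have := (Set.ncard_pos (Set.toFinite _)).mpr this
      omega
    omega
  · show f '' (f ⁻¹' P) = P
    rw [Set.image_preimage_eq_inter_range, Set.inter_eq_left.mpr hPrange]
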